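/- arXiv:2103.12383 — 2 statements merged into one kernel-verified Lean document; each statement's English description precedes it below -/
import Mathlib

section
/- Prékopa's theorem: If φ : ℝ × ℝⁿ → ℝ is a convex function such that for each t ∈ ℝ the integral ∫_{ℝⁿ} e^{-φ(t,x)} dλ(x) is finite, then the function Φ : ℝ → ℝ defined by e^{-Φ(t)} = ∫_{ℝⁿ} e^{-φ(t,x)} dλ(x) is convex. -/
open MeasureTheory

open Set ENNReal Pointwise
open scoped NNReal

namespace PrekopaAux

/-- Two-point AM–GM inequality in `ℝ≥0∞`. -/
lemma amgm {p q : ℝ} (hp : 0 < p) (hq : 0 < q) (hpq : p + q = 1) (X Y : ℝ≥0∞) :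
    X ^ p * Y ^ q ≤ ENNReal.ofReal p * X + ENNReal.ofReal q * Y := by
  rcases eq_or_ne X ⊤ with hX | hX
  · have hne : ENNReal.ofReal p ≠ 0 := by simp [hp]
    have h1 : ENNReal.ofReal p * X = ⊤ := by rw [hX]; exact ENNReal.mul_top hne
    simp [h1]
  rcases eq_or_ne Y ⊤ with hY | hY
  · have hne : ENNReal.ofReal q ≠ 0 := by simp [hq]
    have h1 : ENNReal.ofReal q * Y = ⊤ := by rw [hY]; exact ENNReal.mul_top hne
    simp [h1]
  lift X to ℝ≥0 using hX
  lift Y to ℝ≥0 using hY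
  have hw : p.toNNReal + q.toNNReal = 1 := by
    rw [← NNReal.coe_inj, NNReal.coe_add, Real.coe_toNNReal p hp.le, Real.coe_toNNReal q hq.le,
      NNReal.coe_one, hpq]
  have hmain := NNReal.geom_mean_le_arith_mean2_weighted p.toNNReal q.toNNReal X Y hw
  have hcp : ENNReal.ofReal p = (p.toNNReal : ℝ≥0∞) := rfl
  have hcq : ENNReal.ofReal q = (q.toNNReal : ℝ≥0∞) := rfl
  rw [← ENNReal.coe_rpow_of_nonneg X hp.le, ← ENNReal.coe_rpow_of_nonneg Y hq.le, hcp, hcq,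
    ← ENNReal.coe_mul, ← ENNReal.coe_mul, ← ENNReal.coe_mul, ← ENNReal.coe_add, ENNReal.coe_le_coe]
  simpa [Real.coe_toNNReal p hp.le, Real.coe_toNNReal q hq.le] using hmain

/-- Layer cake formula for `ℝ≥0∞`-valued functions. -/
lemma lintegral_eq_meas_lt {α : Type*} [MeasurableSpace α] (μ : Measure α) [SFinite μ]
    {f : α → ℝ≥0∞} (hf : Measurable f) :
    ∫⁻ a, f a ∂μ = ∫⁻ t in Ioi (0 : ℝ), μ {a | ENNReal.ofReal t < f a} := by
  have hS : MeasurableSet {p : α × ℝ | ENNReal.ofReal p.2 < f p.1} :=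
    measurableSet_lt (ENNReal.measurable_ofReal.comp measurable_snd) (hf.comp measurable_fst)
  have key : ∀ a, f a = ∫⁻ t in Ioi (0:ℝ), {q : ℝ | ENNReal.ofReal q < f a}.indicator 1 t := by
    intro a
    rw [lintegral_indicator (measurableSet_lt ENNReal.measurable_ofReal measurable_const),
      Measure.restrict_restrict (measurableSet_lt ENNReal.measurable_ofReal measurable_const)]
    simp only [Pi.one_apply]
    rw [setLIntegral_one]
    rcases eq_or_ne (f a) ⊤ with hfa | hfa
    · have he : {q : ℝ | ENNReal.ofReal q < f a} ∩ Ioi 0 = Ioi (0:ℝ) := by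
        ext t; simp [hfa, ENNReal.ofReal_lt_top]
      rw [he, Real.volume_Ioi, hfa]
    · have he : {q : ℝ | ENNReal.ofReal q < f a} ∩ Ioi 0 = Ioo 0 (f a).toReal := by
        ext t
        simp only [mem_inter_iff, mem_setOf_eq, mem_Ioi, mem_Ioo]
        constructor
        · rintro ⟨h1, h2⟩
          exact ⟨h2, (ENNReal.ofReal_lt_iff_lt_toReal h2.le hfa).1 h1⟩
        · rintro ⟨h1, h2⟩
          exact ⟨(ENNReal.ofReal_lt_iff_lt_toReal h1.le hfa).2 h2, h1⟩
      rw [he, Real.volume_Ioo, sub_zero, ENNReal.ofReal_toReal hfa]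
  rw [lintegral_congr key]
  have hunc : Function.uncurry
      (fun a (t : ℝ) => ({q : ℝ | ENNReal.ofReal q < f a}.indicator 1 t : ℝ≥0∞))
      = {p : α × ℝ | ENNReal.ofReal p.2 < f p.1}.indicator 1 := by
    funext pp
    by_cases hc : ENNReal.ofReal pp.2 < f pp.1 <;>
      simp [Function.uncurry, Set.indicator, hc]
  have h1 := lintegral_lintegral_swap (μ := μ) (ν := volume.restrict (Ioi (0:ℝ)))
    (f := fun a (t : ℝ) => ({q : ℝ | ENNReal.ofReal q < f a}.indicator 1 t : ℝ≥0∞))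
    (by rw [hunc]; exact (measurable_one.indicator hS).aemeasurable)
  rw [h1]
  apply lintegral_congr
  intro t
  have he : (fun a => ({q : ℝ | ENNReal.ofReal q < f a}.indicator 1 t : ℝ≥0∞))
      = {a : α | ENNReal.ofReal t < f a}.indicator 1 := by
    funext a
    by_cases hc : ENNReal.ofReal t < f a <;> simp [Set.indicator, hc]
  rw [he]
  exact lintegral_indicator_one (measurableSet_lt measurable_const hf)


/-- Superadditivity of Lebesgue measure under set addition on `ℝ`. -/
lemma add_meas_le {A B : Set ℝ} (C : Set ℝ) (hA : MeasurableSet A) (hB : MeasurableSet B)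
    (hAne : A.Nonempty) (hBne : B.Nonempty)
    (hsub : ∀ a ∈ A, ∀ b ∈ B, a + b ∈ C) : volume A + volume B ≤ volume C := by
  obtain ⟨a₀, ha₀⟩ := hAne
  obtain ⟨b₀, hb₀⟩ := hBne
  have key : ∀ K L : Set ℝ, IsCompact K → IsCompact L → K ⊆ A → L ⊆ B →
      volume K + volume L ≤ volume C := by
    intro K L hK hL hKA hLB
    set K' := insert a₀ K with hK'def
    set L' := insert b₀ L with hL'def
    have hK' : IsCompact K' := hK.insert a₀
    have hL' : IsCompact L' := hL.insert b₀
    have hK'A : K' ⊆ A := insert_subset ha₀ hKA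
    have hL'B : L' ⊆ B := insert_subset hb₀ hLB
    set a := sSup K' with ha_def
    set b := sInf L' with hb_def
    have ha : a ∈ K' := hK'.sSup_mem (insert_nonempty _ _)
    have hb : b ∈ L' := hL'.sInf_mem (insert_nonempty _ _)
    have hScpt : IsCompact (b +ᵥ K') := hK'.image (continuous_const.add continuous_id)
    have hTcpt : IsCompact (a +ᵥ L') := hL'.image (continuous_const.add continuous_id)
    have hUnion : (b +ᵥ K') ∪ (a +ᵥ L') ⊆ C := by
      rintro x (hx | hx)
      · obtain ⟨k, hk, rfl⟩ := hx
        simpa [vadd_eq_add, add_comm] using hsub k (hK'A hk) b (hL'B hb)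
      · obtain ⟨l, hl, rfl⟩ := hx
        simpa [vadd_eq_add] using hsub a (hK'A ha) l (hL'B hl)
    have hInter : (b +ᵥ K') ∩ (a +ᵥ L') ⊆ {a + b} := by
      rintro x ⟨hx1, hx2⟩
      obtain ⟨k, hk, rfl⟩ := hx1
      obtain ⟨l, hl, hx⟩ := hx2
      have hka : k ≤ a := le_csSup hK'.bddAbove hk
      have hbl : b ≤ l := csInf_le hL'.bddBelow hl
      simp only [vadd_eq_add] at hx ⊢
      have : b + k = a + b := le_antisymm (by linarith) (by linarith [hx.symm ▸ (by linarith : a + b ≤ a + l)])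
      simp [this]
    have hvol : volume (b +ᵥ K') + volume (a +ᵥ L') ≤ volume C := by
      calc volume (b +ᵥ K') + volume (a +ᵥ L')
          = volume ((b +ᵥ K') ∪ (a +ᵥ L')) + volume ((b +ᵥ K') ∩ (a +ᵥ L')) :=
            (measure_union_add_inter _ hTcpt.isClosed.measurableSet).symm
        _ ≤ volume C + volume {a + b} := add_le_add (measure_mono hUnion) (measure_mono hInter)
        _ = volume C := by simp
    calc volume K + volume L ≤ volume K' + volume L' :=
          add_le_add (measure_mono (subset_insert _ _)) (measure_mono (subset_insert _ _))
      _ = volume (b +ᵥ K') + volume (a +ᵥ L') := by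
          rw [@measure_vadd ℝ ℝ _ _ _ volume _ b K', @measure_vadd ℝ ℝ _ _ _ volume _ a L']
      _ ≤ volume C := hvol
  rcases eq_or_ne (volume C) ⊤ with hC | hC
  · rw [hC]; exact le_top
  have hAfin : volume A ≠ ⊤ := by
    refine ne_top_of_le_ne_top hC ?_
    calc volume A = volume (b₀ +ᵥ A) := (@measure_vadd ℝ ℝ _ _ _ volume _ b₀ A).symm
      _ ≤ volume C := measure_mono (by
          rintro x ⟨y, hy, rfl⟩
          simpa [vadd_eq_add, add_comm] using hsub y hy b₀ hb₀)
  have hBfin : volume B ≠ ⊤ := by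
    refine ne_top_of_le_ne_top hC ?_
    calc volume B = volume (a₀ +ᵥ B) := (@measure_vadd ℝ ℝ _ _ _ volume _ a₀ B).symm
      _ ≤ volume C := measure_mono (by
          rintro x ⟨y, hy, rfl⟩
          simpa [vadd_eq_add] using hsub a₀ ha₀ y hy)
  refine ENNReal.le_of_forall_pos_le_add fun ε hε _ => ?_
  have hε2 : ((ε : ℝ≥0∞) / 2) ≠ 0 := by simp [ENNReal.div_eq_zero_iff, hε.ne']
  obtain ⟨K, hKA, hK, hKvol⟩ := hA.exists_isCompact_lt_add hAfin hε2
  obtain ⟨L, hLB, hL, hLvol⟩ := hB.exists_isCompact_lt_add hBfin hε2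
  calc volume A + volume B ≤ (volume K + (ε : ℝ≥0∞) / 2) + (volume L + (ε : ℝ≥0∞) / 2) :=
        add_le_add hKvol.le hLvol.le
    _ = (volume K + volume L) + (ε : ℝ≥0∞) := by rw [add_add_add_comm, ENNReal.add_halves]
    _ ≤ volume C + (ε : ℝ≥0∞) := add_le_add_left (key K L hK hL hKA hLB) _

/-- Substitution `s ↦ k * s` in a lintegral over `Ioo 0 c`. -/
lemma lintegral_Ioo_comp_mul {k c : ℝ} (hk : 0 < k) (F : ℝ → ℝ≥0∞) (hF : Measurable F) :
    ∫⁻ s in Ioo 0 c, F (k * s) = ENNReal.ofReal k⁻¹ * ∫⁻ v in Ioo 0 (k * c), F v := by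
  have hpre : (fun s : ℝ => k * s) ⁻¹' (Ioo 0 (k * c)) = Ioo 0 c := by
    ext s
    simp only [mem_preimage, mem_Ioo]
    constructor
    · rintro ⟨h1, h2⟩
      exact ⟨by nlinarith, (mul_lt_mul_iff_right₀ hk).1 h2⟩
    · rintro ⟨h1, h2⟩
      exact ⟨mul_pos hk h1, (mul_lt_mul_iff_right₀ hk).2 h2⟩
  have hmap : Measure.map (fun s : ℝ => k * s) (volume.restrict (Ioo 0 c))
      = ENNReal.ofReal k⁻¹ • volume.restrict (Ioo 0 (k * c)) := by
    rw [← hpre, ← Measure.restrict_map (measurable_const_mul k) measurableSet_Ioo,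
      Real.map_volume_mul_left hk.ne', abs_of_pos (inv_pos.2 hk), Measure.restrict_smul]
  rw [← lintegral_map hF (measurable_const_mul k), hmap, lintegral_smul_measure, smul_eq_mul]


lemma isup_rpow {a : ℕ → ℝ≥0∞} (ha : Monotone a) {p : ℝ} (hp : 0 < p) :
    (⨆ n, a n) ^ p = ⨆ n, a n ^ p := by
  have h1 : Filter.Tendsto a Filter.atTop (nhds (⨆ n, a n)) := tendsto_atTop_iSup ha
  have h2 : Filter.Tendsto (fun n => a n ^ p) Filter.atTop (nhds ((⨆ n, a n) ^ p)) :=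
    (ENNReal.continuous_rpow_const.tendsto _).comp h1
  have h3 : Monotone fun n => a n ^ p := fun m n h => ENNReal.rpow_le_rpow (ha h) hp.le
  exact tendsto_nhds_unique h2 (tendsto_atTop_iSup h3)

lemma isup_mul_isup {a b : ℕ → ℝ≥0∞} (ha : Monotone a) (hb : Monotone b) :
    (⨆ n, a n) * (⨆ n, b n) = ⨆ n, a n * b n := by
  apply le_antisymm
  · rw [ENNReal.iSup_mul]
    refine iSup_le fun n => ?_
    rw [ENNReal.mul_iSup]
    refine iSup_le fun m => ?_
    exact le_iSup_of_le (max n m) (mul_le_mul' (ha (le_max_left n m)) (hb (le_max_right n m)))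
  · exact iSup_le fun n => mul_le_mul' (le_iSup a n) (le_iSup b n)


lemma approx_seq {K : ℝ → ℝ≥0∞} (hK : Antitone K) {M : ℝ≥0∞} (hM0 : M ≠ 0)
    (hzero : ∀ s : ℝ, M ≤ ENNReal.ofReal s → K s = 0) :
    ∃ cseq : ℕ → ℝ, (∀ n, 0 < cseq n) ∧ (∀ n, ENNReal.ofReal (cseq n) ≤ M) ∧
      Monotone (fun n => ∫⁻ s in Ioo 0 (cseq n), K s) ∧
      (⨆ n, ∫⁻ s in Ioo 0 (cseq n), K s) = ∫⁻ s in Ioi (0:ℝ), K s := by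
  by_cases hMt : M = ⊤
  · refine ⟨fun n => (n:ℝ)+1, fun n => by positivity, fun n => by simp [hMt], ?_, ?_⟩
    · intro m n hmn
      apply lintegral_mono_set
      apply Ioo_subset_Ioo_right
      show (m:ℝ) + 1 ≤ (n:ℝ) + 1
      have : (m:ℝ) ≤ (n:ℝ) := Nat.cast_le.2 hmn
      linarith
    · have hU : Ioi (0:ℝ) = ⋃ n : ℕ, Ioo 0 ((n:ℝ)+1) := by
        ext s
        simp only [mem_Ioi, mem_iUnion, mem_Ioo]
        constructor
        · intro hs
          obtain ⟨n, hn⟩ := exists_nat_gt s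
          exact ⟨n, hs, hn.trans (lt_add_one _)⟩
        · rintro ⟨n, hn, -⟩
          exact hn
      rw [hU, setLIntegral_iUnion_of_directed]
      refine Monotone.directed_le fun m n hmn => Ioo_subset_Ioo_right ?_
      show (m:ℝ) + 1 ≤ (n:ℝ) + 1
      have : (m:ℝ) ≤ (n:ℝ) := Nat.cast_le.2 hmn
      linarith
  · set cM := M.toReal with hcM_def
    have hcM : 0 < cM := ENNReal.toReal_pos hM0 hMt
    have hIoi : ∫⁻ s in Ioi (0:ℝ), K s = ∫⁻ s in Ioo 0 cM, K s := by
      have hsplit : Ioi (0:ℝ) = Ioo 0 cM ∪ Ici cM := by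
        ext s
        simp only [mem_Ioi, mem_union, mem_Ioo, mem_Ici]
        constructor
        · intro hs
          rcases lt_or_ge s cM with hlt | hle
          · exact Or.inl ⟨hs, hlt⟩
          · exact Or.inr hle
        · rintro (⟨h1, -⟩ | h1)
          · exact h1
          · linarith
      have hdisj : Disjoint (Ioo (0:ℝ) cM) (Ici cM) :=
        Set.disjoint_left.2 fun x hx h2 => absurd hx.2 (not_lt.2 h2)
      rw [hsplit, lintegral_union measurableSet_Ici hdisj]
      have h0 : ∫⁻ s in Ici cM, K s = 0 := by
        have hKz : ∀ s ∈ Ici cM, K s = (fun _ => (0:ℝ≥0∞)) s := by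
          intro s hs
          refine hzero s ?_
          calc M = ENNReal.ofReal cM := (ENNReal.ofReal_toReal hMt).symm
            _ ≤ ENNReal.ofReal s := ENNReal.ofReal_le_ofReal hs
        rw [setLIntegral_congr_fun measurableSet_Ici hKz]
        simp
      rw [h0, add_zero]
    refine ⟨fun _ => cM, fun _ => hcM, fun n => by simp [hcM_def, ENNReal.ofReal_toReal hMt],
      monotone_const, ?_⟩
    rw [hIoi]
    exact iSup_const

/-- The Prékopa–Leindler property of a measure on a real vector space. -/
def IsPL (E : Type*) [MeasurableSpace E] [AddCommMonoid E] [Module ℝ E] (μ : Measure E) : Prop :=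
  ∀ p q : ℝ, 0 < p → 0 < q → p + q = 1 →
    ∀ f g h : E → ℝ≥0∞, Measurable f → Measurable g → Measurable h →
      (∀ x y, f x ^ p * g y ^ q ≤ h (p • x + q • y)) →
      (∫⁻ x, f x ∂μ) ^ p * (∫⁻ x, g x ∂μ) ^ q ≤ ∫⁻ x, h x ∂μ

theorem isPL_real : IsPL ℝ volume := by
  intro p q hp hq hpq f g h hf hg hh hle
  by_cases hf0 : ∫⁻ x, f x = 0
  · rw [hf0, ENNReal.zero_rpow_of_pos hp, zero_mul]; exact zero_le
  by_cases hg0 : ∫⁻ x, g x = 0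
  · rw [hg0, ENNReal.zero_rpow_of_pos hq, mul_zero]; exact zero_le
  set Mf := ⨆ x, f x with hMf_def
  set Mg := ⨆ x, g x with hMg_def
  have hMf : Mf ≠ 0 := by
    intro h0
    refine hf0 ?_
    have hz : f = fun _ => 0 := funext fun x => le_antisymm (h0 ▸ le_iSup f x) zero_le
    simp [hz]
  have hMg : Mg ≠ 0 := by
    intro h0
    refine hg0 ?_
    have hz : g = fun _ => 0 := funext fun x => le_antisymm (h0 ▸ le_iSup g x) zero_le
    simp [hz]
  -- tail measure functions
  set Ff : ℝ → ℝ≥0∞ := fun t => volume {x | ENNReal.ofReal t < f x} with hFf_def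
  set Gg : ℝ → ℝ≥0∞ := fun t => volume {x | ENNReal.ofReal t < g x} with hGg_def
  have hFf_anti : Antitone Ff := fun s t hst =>
    measure_mono fun x hx => lt_of_le_of_lt (ENNReal.ofReal_le_ofReal hst) hx
  have hGg_anti : Antitone Gg := fun s t hst =>
    measure_mono fun x hx => lt_of_le_of_lt (ENNReal.ofReal_le_ofReal hst) hx
  have hFf_m : Measurable Ff := hFf_anti.measurable
  have hGg_m : Measurable Gg := hGg_anti.measurable
  set J : (ℝ → ℝ≥0∞) → ℝ → ℝ≥0∞ := fun k c => ∫⁻ s in Ioo 0 c, k s with hJ_def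
  have KEY : ∀ cf cg : ℝ, 0 < cf → ENNReal.ofReal cf ≤ Mf → 0 < cg → ENNReal.ofReal cg ≤ Mg →
      J Ff cf ^ p * J Gg cg ^ q ≤ ∫⁻ z, h z := by
    intro cf cg hcf hcfM hcg hcgM
    set c := cf ^ p * cg ^ q with hc_def
    have hc : 0 < c := mul_pos (Real.rpow_pos_of_pos hcf _) (Real.rpow_pos_of_pos hcg _)
    have hcpq : ∀ r : ℝ, 0 < r → r ^ p * r ^ q = r := by
      intro r hr
      rw [← Real.rpow_add hr, hpq, Real.rpow_one]
    -- pointwise measure inequality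
    have meas_ineq : ∀ s ∈ Ioo (0:ℝ) c,
        ENNReal.ofReal p * Ff (cf / c * s) + ENNReal.ofReal q * Gg (cg / c * s)
          ≤ volume {z | ENNReal.ofReal s < h z} := by
      intro s hs
      obtain ⟨hs0, hsc⟩ := hs
      have hfc0 : 0 < cf / c * s := mul_pos (div_pos hcf hc) hs0
      have hgc0 : 0 < cg / c * s := mul_pos (div_pos hcg hc) hs0
      have hfc : cf / c * s < cf := by
        have h1 : cf / c * s < cf / c * c := mul_lt_mul_of_pos_left hsc (div_pos hcf hc)
        rwa [div_mul_cancel₀ _ hc.ne'] at h1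
      have hgc : cg / c * s < cg := by
        have h1 : cg / c * s < cg / c * c := mul_lt_mul_of_pos_left hsc (div_pos hcg hc)
        rwa [div_mul_cancel₀ _ hc.ne'] at h1
      set A := {x : ℝ | ENNReal.ofReal (cf / c * s) < f x} with hA_def
      set B := {x : ℝ | ENNReal.ofReal (cg / c * s) < g x} with hB_def
      have hAm : MeasurableSet A := measurableSet_lt measurable_const hf
      have hBm : MeasurableSet B := measurableSet_lt measurable_const hg
      have hAne : A.Nonempty := by
        have h1 : ENNReal.ofReal (cf / c * s) < Mf :=
          lt_of_lt_of_le ((ENNReal.ofReal_lt_ofReal_iff hcf).2 hfc) hcfM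
        obtain ⟨x, hx⟩ := lt_iSup_iff.1 h1
        exact ⟨x, hx⟩
      have hBne : B.Nonempty := by
        have h1 : ENNReal.ofReal (cg / c * s) < Mg :=
          lt_of_lt_of_le ((ENNReal.ofReal_lt_ofReal_iff hcg).2 hgc) hcgM
        obtain ⟨x, hx⟩ := lt_iSup_iff.1 h1
        exact ⟨x, hx⟩
      set A' := (fun x : ℝ => p⁻¹ * x) ⁻¹' A with hA'_def
      set B' := (fun x : ℝ => q⁻¹ * x) ⁻¹' B with hB'_def
      have hA'm : MeasurableSet A' := hAm.preimage (measurable_const_mul _)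
      have hB'm : MeasurableSet B' := hBm.preimage (measurable_const_mul _)
      have hA'ne : A'.Nonempty := by
        obtain ⟨x, hx⟩ := hAne
        exact ⟨p * x, by simp [hA'_def, inv_mul_cancel_left₀ hp.ne', hx]⟩
      have hB'ne : B'.Nonempty := by
        obtain ⟨x, hx⟩ := hBne
        exact ⟨q * x, by simp [hB'_def, inv_mul_cancel_left₀ hq.ne', hx]⟩
      have hsub : ∀ u ∈ A', ∀ v ∈ B', u + v ∈ {z : ℝ | ENNReal.ofReal s < h z} := by
        intro u hu v hv
        have hu' : ENNReal.ofReal (cf / c * s) < f (p⁻¹ * u) := hu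
        have hv' : ENNReal.ofReal (cg / c * s) < g (q⁻¹ * v) := hv
        have hmain := hle (p⁻¹ * u) (q⁻¹ * v)
        have hval : p • (p⁻¹ * u) + q • (q⁻¹ * v) = u + v := by
          simp only [smul_eq_mul]
          rw [mul_inv_cancel_left₀ hp.ne', mul_inv_cancel_left₀ hq.ne']
        rw [hval] at hmain
        refine Set.mem_setOf.2 (lt_of_lt_of_le ?_ hmain)
        have heq : ENNReal.ofReal s =
            ENNReal.ofReal (cf / c * s) ^ p * ENNReal.ofReal (cg / c * s) ^ q := by
          rw [ENNReal.ofReal_rpow_of_pos hfc0, ENNReal.ofReal_rpow_of_pos hgc0,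
            ← ENNReal.ofReal_mul (Real.rpow_nonneg hfc0.le _)]
          congr 1
          have e1 : (cf / c * s) ^ p = (cf/c)^p * s^p :=
            Real.mul_rpow (div_pos hcf hc).le hs0.le
          have e2 : (cg / c * s) ^ q = (cg/c)^q * s^q :=
            Real.mul_rpow (div_pos hcg hc).le hs0.le
          have e3 : (cf/c)^p * (cg/c)^q = 1 := by
            rw [Real.div_rpow hcf.le hc.le, Real.div_rpow hcg.le hc.le,
              div_mul_div_comm, hcpq c hc]
            rw [hc_def]
            exact div_self hc.ne'
          calc s = (1 : ℝ) * s := (one_mul s).symm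
            _ = ((cf/c)^p * (cg/c)^q) * (s^p * s^q) := by rw [e3, hcpq s hs0]
            _ = (cf / c * s) ^ p * (cg / c * s) ^ q := by rw [e1, e2]; ring
        rw [heq]
        exact ENNReal.mul_lt_mul (ENNReal.rpow_lt_rpow hu' hp) (ENNReal.rpow_lt_rpow hv' hq)
      have hvolA' : volume A' = ENNReal.ofReal p * volume A := by
        have h1 : volume A' = Measure.map (fun x : ℝ => p⁻¹ * x) volume A :=
          (Measure.map_apply (measurable_const_mul _) hAm).symm
        rw [h1, Real.map_volume_mul_left (inv_ne_zero hp.ne'), inv_inv, abs_of_pos hp,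
          Measure.smul_apply, smul_eq_mul]
      have hvolB' : volume B' = ENNReal.ofReal q * volume B := by
        have h1 : volume B' = Measure.map (fun x : ℝ => q⁻¹ * x) volume B :=
          (Measure.map_apply (measurable_const_mul _) hBm).symm
        rw [h1, Real.map_volume_mul_left (inv_ne_zero hq.ne'), inv_inv, abs_of_pos hq,
          Measure.smul_apply, smul_eq_mul]
      have := add_meas_le {z : ℝ | ENNReal.ofReal s < h z} hA'm hB'm hA'ne hB'ne hsub
      rwa [hvolA', hvolB'] at this
    -- integrate the pointwise inequality
    have step1 : ∫⁻ s in Ioo 0 c, volume {z | ENNReal.ofReal s < h z} ≤ ∫⁻ z, h z := by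
      rw [lintegral_eq_meas_lt volume hh]
      exact lintegral_mono_set Ioo_subset_Ioi_self
    have hmFs : Measurable fun s : ℝ => Ff (cf / c * s) :=
      hFf_m.comp (measurable_const_mul _)
    have hmGs : Measurable fun s : ℝ => Gg (cg / c * s) :=
      hGg_m.comp (measurable_const_mul _)
    have step2 :
        ENNReal.ofReal p * (∫⁻ s in Ioo 0 c, Ff (cf / c * s))
          + ENNReal.ofReal q * (∫⁻ s in Ioo 0 c, Gg (cg / c * s))
          ≤ ∫⁻ s in Ioo 0 c, volume {z | ENNReal.ofReal s < h z} := by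
      have e1 : ∫⁻ s in Ioo 0 c,
          (ENNReal.ofReal p * Ff (cf / c * s) + ENNReal.ofReal q * Gg (cg / c * s))
          = ENNReal.ofReal p * (∫⁻ s in Ioo 0 c, Ff (cf / c * s))
            + ENNReal.ofReal q * (∫⁻ s in Ioo 0 c, Gg (cg / c * s)) := by
        rw [lintegral_add_left (hmFs.const_mul _), lintegral_const_mul _ hmFs,
          lintegral_const_mul _ hmGs]
      rw [← e1]
      refine lintegral_mono_ae ((ae_restrict_iff' measurableSet_Ioo).2 (ae_of_all _ ?_))
      exact meas_ineq
    have sub_f : (∫⁻ s in Ioo 0 c, Ff (cf / c * s)) = ENNReal.ofReal (c / cf) * J Ff cf := by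
      have harg : cf / c * c = cf := div_mul_cancel₀ _ hc.ne'
      have := lintegral_Ioo_comp_mul (c := c) (div_pos hcf hc) Ff hFf_m
      rw [harg, inv_div] at this
      exact this
    have sub_g : (∫⁻ s in Ioo 0 c, Gg (cg / c * s)) = ENNReal.ofReal (c / cg) * J Gg cg := by
      have harg : cg / c * c = cg := div_mul_cancel₀ _ hc.ne'
      have := lintegral_Ioo_comp_mul (c := c) (div_pos hcg hc) Gg hGg_m
      rw [harg, inv_div] at this
      exact this
    have hone : ENNReal.ofReal (c/cf) ^ p * ENNReal.ofReal (c/cg) ^ q = 1 := by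
      rw [ENNReal.ofReal_rpow_of_pos (div_pos hc hcf), ENNReal.ofReal_rpow_of_pos (div_pos hc hcg),
        ← ENNReal.ofReal_mul (Real.rpow_nonneg (div_pos hc hcf).le _)]
      rw [Real.div_rpow hc.le hcf.le, Real.div_rpow hc.le hcg.le, div_mul_div_comm,
        hcpq c hc]
      rw [show cf ^ p * cg ^ q = c from hc_def.symm, div_self hc.ne']
      exact ENNReal.ofReal_one
    have hstart : J Ff cf ^ p * J Gg cg ^ q
        = (ENNReal.ofReal (c/cf) * J Ff cf) ^ p * (ENNReal.ofReal (c/cg) * J Gg cg) ^ q := by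
      rw [ENNReal.mul_rpow_of_nonneg _ _ hp.le, ENNReal.mul_rpow_of_nonneg _ _ hq.le,
        mul_mul_mul_comm, hone, one_mul]
    calc J Ff cf ^ p * J Gg cg ^ q
        = (ENNReal.ofReal (c/cf) * J Ff cf) ^ p * (ENNReal.ofReal (c/cg) * J Gg cg) ^ q := hstart
      _ ≤ ENNReal.ofReal p * (ENNReal.ofReal (c/cf) * J Ff cf)
            + ENNReal.ofReal q * (ENNReal.ofReal (c/cg) * J Gg cg) := amgm hp hq hpq _ _
      _ = ENNReal.ofReal p * (∫⁻ s in Ioo 0 c, Ff (cf / c * s))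
            + ENNReal.ofReal q * (∫⁻ s in Ioo 0 c, Gg (cg / c * s)) := by rw [sub_f, sub_g]
      _ ≤ ∫⁻ s in Ioo 0 c, volume {z | ENNReal.ofReal s < h z} := step2
      _ ≤ ∫⁻ z, h z := step1
  -- assemble via approximating sequences
  have hIf : (∫⁻ x, f x) = ∫⁻ s in Ioi (0:ℝ), Ff s := lintegral_eq_meas_lt volume hf
  have hIg : (∫⁻ x, g x) = ∫⁻ s in Ioi (0:ℝ), Gg s := lintegral_eq_meas_lt volume hg
  have hFzero : ∀ s : ℝ, Mf ≤ ENNReal.ofReal s → Ff s = 0 := by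
    intro s hs
    have he : {x : ℝ | ENNReal.ofReal s < f x} = ∅ :=
      eq_empty_iff_forall_notMem.2 fun x hx =>
        lt_irrefl _ (lt_of_lt_of_le hx ((le_iSup f x).trans hs))
    show volume {x : ℝ | ENNReal.ofReal s < f x} = 0
    rw [he]
    exact measure_empty
  have hGzero : ∀ s : ℝ, Mg ≤ ENNReal.ofReal s → Gg s = 0 := by
    intro s hs
    have he : {x : ℝ | ENNReal.ofReal s < g x} = ∅ :=
      eq_empty_iff_forall_notMem.2 fun x hx =>
        lt_irrefl _ (lt_of_lt_of_le hx ((le_iSup g x).trans hs))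
    show volume {x : ℝ | ENNReal.ofReal s < g x} = 0
    rw [he]
    exact measure_empty
  obtain ⟨cfs, hcfs_pos, hcfs_le, hcfs_mono, hcfs_sup⟩ := approx_seq hFf_anti hMf hFzero
  obtain ⟨cgs, hcgs_pos, hcgs_le, hcgs_mono, hcgs_sup⟩ := approx_seq hGg_anti hMg hGzero
  rw [hIf, hIg, ← hcfs_sup, ← hcgs_sup, isup_rpow hcfs_mono hp, isup_rpow hcgs_mono hq,
    isup_mul_isup (fun m n hmn => ENNReal.rpow_le_rpow (hcfs_mono hmn) hp.le)
      (fun m n hmn => ENNReal.rpow_le_rpow (hcgs_mono hmn) hq.le)]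
  exact iSup_le fun n => KEY (cfs n) (cgs n) (hcfs_pos n) (hcfs_le n) (hcgs_pos n) (hcgs_le n)


theorem isPL_prod {E F : Type*} [MeasurableSpace E] [MeasurableSpace F]
    [AddCommMonoid E] [Module ℝ E] [AddCommMonoid F] [Module ℝ F]
    {μ : Measure E} {ν : Measure F} [SFinite μ] [SFinite ν]
    (hE : IsPL E μ) (hF : IsPL F ν) : IsPL (E × F) (μ.prod ν) := by
  intro p q hp hq hpq f g h hf hg hh hle
  set F₁ : E → ℝ≥0∞ := fun s => ∫⁻ x, f (s, x) ∂ν with hF₁_def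
  set G₁ : E → ℝ≥0∞ := fun t => ∫⁻ y, g (t, y) ∂ν with hG₁_def
  set H₁ : E → ℝ≥0∞ := fun t => ∫⁻ z, h (t, z) ∂ν with hH₁_def
  have hF₁m : Measurable F₁ := hf.lintegral_prod_right'
  have hG₁m : Measurable G₁ := hg.lintegral_prod_right'
  have hH₁m : Measurable H₁ := hh.lintegral_prod_right'
  have key : ∀ s t : E, F₁ s ^ p * G₁ t ^ q ≤ H₁ (p • s + q • t) := by
    intro s t
    refine hF p q hp hq hpq (fun x => f (s, x)) (fun y => g (t, y))
      (fun z => h (p • s + q • t, z)) (hf.comp measurable_prodMk_left)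
      (hg.comp measurable_prodMk_left) (hh.comp measurable_prodMk_left) ?_
    intro x y
    have hthis := hle (s, x) (t, y)
    simpa [Prod.smul_mk, Prod.mk_add_mk] using hthis
  have main := hE p q hp hq hpq F₁ G₁ H₁ hF₁m hG₁m hH₁m key
  rw [lintegral_prod f hf.aemeasurable, lintegral_prod g hg.aemeasurable,
    lintegral_prod h hh.aemeasurable]
  exact main

theorem isPL_map {E F : Type*} [MeasurableSpace E] [MeasurableSpace F]
    [AddCommMonoid E] [Module ℝ E] [AddCommMonoid F] [Module ℝ F]
    {μ : Measure E} {ν : Measure F} (e : E ≃ᵐ F) (he : MeasurePreserving e μ ν)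
    (hadd : ∀ x y : E, e (x + y) = e x + e y) (hsmul : ∀ (c : ℝ) (x : E), e (c • x) = c • e x)
    (hE : IsPL E μ) : IsPL F ν := by
  intro p q hp hq hpq f g h hf hg hh hle
  have key := hE p q hp hq hpq (fun x => f (e x)) (fun x => g (e x)) (fun x => h (e x))
    (hf.comp e.measurable) (hg.comp e.measurable) (hh.comp e.measurable) ?_
  · rwa [he.lintegral_comp hf, he.lintegral_comp hg, he.lintegral_comp hh] at key
  · intro x y
    calc f (e x) ^ p * g (e y) ^ q ≤ h (p • e x + q • e y) := hle (e x) (e y)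
      _ = h (e (p • x + q • y)) := by rw [hadd, hsmul, hsmul]

theorem isPL_pi : ∀ n : ℕ, IsPL (Fin n → ℝ) volume := by
  intro n
  induction n with
  | zero =>
    intro p q hp hq hpq f g h hf hg hh hle
    have huniv : (volume : Measure (Fin 0 → ℝ)) Set.univ = 1 := by
      rw [MeasureTheory.volume_pi, Measure.pi_univ]
      simp
    have hconst : ∀ k : (Fin 0 → ℝ) → ℝ≥0∞, (∫⁻ x, k x) = k 0 := by
      intro k
      have hk : k = fun _ => k 0 := funext fun x => congrArg k (Subsingleton.elim x 0)
      rw [hk, lintegral_const, huniv, mul_one]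
    rw [hconst f, hconst g, hconst h]
    have hthis := hle 0 0
    have h0 : p • (0 : Fin 0 → ℝ) + q • (0 : Fin 0 → ℝ) = 0 := by simp
    rwa [h0] at hthis
  | succ n ih =>
    have base : IsPL (ℝ × (Fin n → ℝ)) ((volume : Measure ℝ).prod volume) :=
      isPL_prod isPL_real ih
    set e := (MeasurableEquiv.piFinSuccAbove (fun _ : Fin (n+1) => ℝ) 0).symm with he_def
    have hmp : MeasurePreserving e ((volume : Measure ℝ).prod volume) volume := by
      have h1 := volume_preserving_piFinSuccAbove (fun _ : Fin (n+1) => ℝ) 0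
      have h2 := h1.symm (MeasurableEquiv.piFinSuccAbove (fun _ : Fin (n+1) => ℝ) 0)
      rw [← Measure.volume_eq_prod]
      exact h2
    have happ : ∀ z : ℝ × (Fin n → ℝ), e z = Fin.insertNth 0 z.1 z.2 := fun z => rfl
    refine isPL_map e hmp ?_ ?_ base
    · intro x y
      rw [happ, happ, happ]
      funext j
      induction j using Fin.cases with
      | zero => simp
      | succ i => simp [Fin.succAbove_zero, Fin.insertNth_apply_succAbove]
    · intro c x
      rw [happ, happ]
      funext j
      induction j using Fin.cases with
      | zero => simp
      | succ i => simp [Fin.succAbove_zero, Fin.insertNth_apply_succAbove]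

theorem isPL_euclidean (n : ℕ) : IsPL (EuclideanSpace ℝ (Fin n)) volume := by
  set e := MeasurableEquiv.toLp 2 (Fin n → ℝ) with he_def
  have hmp : MeasurePreserving e volume volume :=
    (EuclideanSpace.volume_preserving_symm_measurableEquiv_toLp (Fin n)).symm _
  exact isPL_map e hmp (fun x y => rfl) (fun c x => rfl) (isPL_pi n)


end PrekopaAux

open PrekopaAux

/-- **Prékopa's theorem.** If `φ : ℝ × ℝⁿ → ℝ` is convex and for each `t` the integral
`∫_{ℝⁿ} e^{-φ(t,x)} dλ(x)` is finite, then `Φ(t) := -log ∫_{ℝⁿ} e^{-φ(t,x)} dλ(x)`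
(so that `e^{-Φ(t)}` equals the integral) is convex. -/
theorem prekopa (n : ℕ) (φ : ℝ × EuclideanSpace ℝ (Fin n) → ℝ)
    (hφ : ConvexOn ℝ Set.univ φ)
    (hint : ∀ t : ℝ, Integrable (fun x : EuclideanSpace ℝ (Fin n) => Real.exp (-φ (t, x)))) :
    ConvexOn ℝ Set.univ
      (fun t : ℝ => -Real.log (∫ x : EuclideanSpace ℝ (Fin n), Real.exp (-φ (t, x)))) := by
  have hPL := isPL_euclidean n
  have hφc : Continuous φ := hφ.locallyLipschitz.continuous
  set I : ℝ → ℝ := fun t => ∫ x, Real.exp (-φ (t, x)) with hI_def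
  have hIpos : ∀ t, 0 < I t := by
    intro t
    rw [hI_def]
    rw [integral_pos_iff_support_of_nonneg_ae (ae_of_all _ fun x => (Real.exp_pos _).le) (hint t)]
    have hsupp : Function.support (fun x : EuclideanSpace ℝ (Fin n) => Real.exp (-φ (t, x)))
        = Set.univ := Set.eq_univ_of_forall fun x => (Real.exp_pos _).ne'
    rw [hsupp]
    exact isOpen_univ.measure_pos volume ⟨0, trivial⟩
  set L : ℝ → ℝ≥0∞ := fun t => ∫⁻ x, ENNReal.ofReal (Real.exp (-φ (t, x))) with hL_def
  have hLI : ∀ t, L t = ENNReal.ofReal (I t) := fun t =>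
    (ofReal_integral_eq_lintegral_ofReal (hint t) (ae_of_all _ fun x => (Real.exp_pos _).le)).symm
  refine ⟨convex_univ, ?_⟩
  intro a _ b _ p q hp' hq' hpq
  rcases eq_or_lt_of_le hp' with hp0 | hp
  · have hq1 : q = 1 := by linarith
    simp [← hp0, hq1]
  rcases eq_or_lt_of_le hq' with hq0 | hq
  · have hp1 : p = 1 := by linarith
    simp [← hq0, hp1]
  set m := p • a + q • b with hm_def
  have hmes : ∀ t : ℝ, Measurable fun x : EuclideanSpace ℝ (Fin n) =>
      ENNReal.ofReal (Real.exp (-φ (t, x))) := by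
    intro t
    exact ENNReal.measurable_ofReal.comp
      ((Real.continuous_exp.comp (continuous_neg.comp
        (hφc.comp (continuous_const.prodMk continuous_id)))).measurable)
  have key := hPL p q hp hq hpq
    (fun x => ENNReal.ofReal (Real.exp (-φ (a, x))))
    (fun x => ENNReal.ofReal (Real.exp (-φ (b, x))))
    (fun x => ENNReal.ofReal (Real.exp (-φ (m, x))))
    (hmes a) (hmes b) (hmes m) ?_
  swap
  · intro x y
    have hconv := hφ.2 (Set.mem_univ (a, x)) (Set.mem_univ (b, y)) hp.le hq.le hpq
    have harg : p • ((a : ℝ), x) + q • ((b : ℝ), y) = (m, p • x + q • y) := by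
      rw [Prod.smul_mk, Prod.smul_mk, Prod.mk_add_mk]
    rw [harg] at hconv
    rw [ENNReal.ofReal_rpow_of_pos (Real.exp_pos _), ENNReal.ofReal_rpow_of_pos (Real.exp_pos _),
      ← ENNReal.ofReal_mul (Real.rpow_nonneg (Real.exp_pos _).le _)]
    apply ENNReal.ofReal_le_ofReal
    rw [← Real.exp_mul, ← Real.exp_mul, ← Real.exp_add]
    apply Real.exp_le_exp.2
    have : φ (m, p • x + q • y) ≤ p * φ (a, x) + q * φ (b, y) := hconv
    nlinarith [this]
  -- key : L a ^ p * L b ^ q ≤ L m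
  have hreal : I a ^ p * I b ^ q ≤ I m := by
    have h1 : ENNReal.ofReal (I a ^ p * I b ^ q) ≤ ENNReal.ofReal (I m) := by
      rw [ENNReal.ofReal_mul (Real.rpow_nonneg (hIpos a).le _),
        ← ENNReal.ofReal_rpow_of_pos (hIpos a), ← ENNReal.ofReal_rpow_of_pos (hIpos b),
        ← hLI, ← hLI, ← hLI]
      exact key
    exact (ENNReal.ofReal_le_ofReal_iff (hIpos m).le).1 h1
  have hlog : p * Real.log (I a) + q * Real.log (I b) ≤ Real.log (I m) := by
    have h2 := Real.log_le_log
      (mul_pos (Real.rpow_pos_of_pos (hIpos a) p) (Real.rpow_pos_of_pos (hIpos b) q)) hreal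
    rwa [Real.log_mul (Real.rpow_pos_of_pos (hIpos a) p).ne'
      (Real.rpow_pos_of_pos (hIpos b) q).ne', Real.log_rpow (hIpos a),
      Real.log_rpow (hIpos b)] at h2
  show -Real.log (I m) ≤ p • (-Real.log (I a)) + q • (-Real.log (I b))
  simp only [smul_eq_mul]
  linarith [hlog]
end

section
/- If V ⊆ ℝⁿ is a convex domain, φ : ℝ × V → ℝ is convex, V is bounded, and for each t ∈ ℝ the integral ∫_V e^{-φ(t,x)} dλ(x) is finite, then the function Φ defined by e^{-Φ(t)} = ∫_V e^{-φ(t,x)} dλ(x) is convex on ℝ. -/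
open MeasureTheory Set
open scoped Pointwise ENNReal NNReal

/-- Weighted AM-GM for two ENNReal numbers. -/
lemma pk_geom_mean {a b : ℝ≥0∞} {s t : ℝ} (hs : 0 < s) (ht : 0 < t) (hst : s + t = 1) :
    a ^ s * b ^ t ≤ ENNReal.ofReal s * a + ENNReal.ofReal t * b := by
  rcases eq_or_ne a ⊤ with rfl | ha
  · have : ENNReal.ofReal s * ⊤ = ⊤ := by
      simp [ENNReal.mul_top, (ENNReal.ofReal_pos.mpr hs).ne']
    simp [this]
  rcases eq_or_ne b ⊤ with rfl | hb
  · have : ENNReal.ofReal t * ⊤ = ⊤ := by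
      simp [ENNReal.mul_top, (ENNReal.ofReal_pos.mpr ht).ne']
    simp [this]
  lift a to ℝ≥0 using ha
  lift b to ℝ≥0 using hb
  have key : (a : ℝ) ^ s * (b : ℝ) ^ t ≤ s * a + t * b :=
    Real.geom_mean_le_arith_mean2_weighted hs.le ht.le a.coe_nonneg b.coe_nonneg hst
  calc (a : ℝ≥0∞) ^ s * (b : ℝ≥0∞) ^ t
      = ENNReal.ofReal ((a : ℝ) ^ s * (b : ℝ) ^ t) := by
        rw [ENNReal.ofReal_mul (Real.rpow_nonneg a.coe_nonneg s)]
        rw [← ENNReal.ofReal_rpow_of_nonneg a.coe_nonneg hs.le,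
          ← ENNReal.ofReal_rpow_of_nonneg b.coe_nonneg ht.le]
        simp [ENNReal.ofReal_coe_nnreal]
    _ ≤ ENNReal.ofReal (s * a + t * b) := ENNReal.ofReal_le_ofReal key
    _ ≤ ENNReal.ofReal s * a + ENNReal.ofReal t * b := by
        rw [ENNReal.ofReal_add (by positivity) (by positivity),
          ENNReal.ofReal_mul hs.le, ENNReal.ofReal_mul ht.le]
        simp [ENNReal.ofReal_coe_nnreal]

/-- Layer cake for ENNReal-valued functions. -/
lemma pk_layercake {X : Type*} [MeasurableSpace X] (mu : Measure X) [SigmaFinite mu]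
    {f : X → ℝ≥0∞} (hf : Measurable f) :
    ∫⁻ a, f a ∂mu = ∫⁻ s in Ioi (0 : ℝ), mu {a | ENNReal.ofReal s < f a} := by
  set g : ℝ → X → ℝ≥0∞ := fun s a => if ENNReal.ofReal s < f a then 1 else 0 with hg
  have hgm : Measurable (Function.uncurry g) := by
    have hset : MeasurableSet {p : ℝ × X | ENNReal.ofReal p.1 < f p.2} :=
      measurableSet_lt (ENNReal.measurable_ofReal.comp measurable_fst)
        (hf.comp measurable_snd)
    have : Function.uncurry g =
        ({p : ℝ × X | ENNReal.ofReal p.1 < f p.2}).indicator (fun _ => 1) := by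
      ext p
      by_cases h : ENNReal.ofReal p.1 < f p.2 <;>
        simp [Function.uncurry, Set.indicator, g, h]
    rw [this]
    exact measurable_const.indicator hset
  have swap : ∫⁻ s in Ioi (0:ℝ), (∫⁻ a, g s a ∂mu)
      = ∫⁻ a, (∫⁻ s in Ioi (0:ℝ), g s a) ∂mu :=
    lintegral_lintegral_swap hgm.aemeasurable
  have step1 : ∀ s : ℝ, (∫⁻ a, g s a ∂mu) = mu {a | ENNReal.ofReal s < f a} := by
    intro s
    have : g s = ({a | ENNReal.ofReal s < f a}).indicator (1 : X → ℝ≥0∞) := by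
      ext a; by_cases h : ENNReal.ofReal s < f a <;> simp [Set.indicator, g, h]
    rw [this, lintegral_indicator_one (measurableSet_lt measurable_const hf)]
  have step2 : ∀ a : X, (∫⁻ s in Ioi (0:ℝ), g s a) = f a := by
    intro a
    have : (fun s => g s a) = ({s : ℝ | ENNReal.ofReal s < f a}).indicator (1 : ℝ → ℝ≥0∞) := by
      ext s; by_cases h : ENNReal.ofReal s < f a <;> simp [Set.indicator, g, h]
    rw [this, lintegral_indicator_one
        (measurableSet_lt (f := fun s : ℝ => ENNReal.ofReal s) (by fun_prop) measurable_const),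
      Measure.restrict_apply' measurableSet_Ioi]
    rcases eq_or_ne (f a) ⊤ with htop | htop
    · have : {s : ℝ | ENNReal.ofReal s < f a} ∩ Ioi 0 = Ioi 0 := by
        ext s; simp [htop]
      rw [this, htop, Real.volume_Ioi]
    · have : {s : ℝ | ENNReal.ofReal s < f a} ∩ Ioi 0 = Ioo 0 ((f a).toReal) := by
        ext s
        simp only [mem_inter_iff, mem_setOf_eq, mem_Ioi, mem_Ioo]
        constructor
        · rintro ⟨h1, h2⟩
          exact ⟨h2, (ENNReal.ofReal_lt_iff_lt_toReal h2.le htop).mp h1⟩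
        · rintro ⟨h1, h2⟩
          exact ⟨(ENNReal.ofReal_lt_iff_lt_toReal h1.le htop).mpr h2, h1⟩
      rw [this, Real.volume_Ioo, sub_zero, ENNReal.ofReal_toReal htop]
  calc ∫⁻ a, f a ∂mu = ∫⁻ a, (∫⁻ s in Ioi (0:ℝ), g s a) ∂mu := by
        refine lintegral_congr fun a => (step2 a).symm
    _ = ∫⁻ s in Ioi (0:ℝ), (∫⁻ a, g s a ∂mu) := swap.symm
    _ = ∫⁻ s in Ioi (0:ℝ), mu {a | ENNReal.ofReal s < f a} :=
        lintegral_congr fun s => step1 s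

/-- One-dimensional Brunn–Minkowski for compact sets. -/
lemma pk_bm_compact {K L : Set ℝ} (hK : IsCompact K) (hL : IsCompact L)
    (hK0 : K.Nonempty) (hL0 : L.Nonempty) :
    volume K + volume L ≤ volume (K + L) := by
  set a := sSup K with ha
  set b := sInf L with hb
  have haK : a ∈ K := hK.sSup_mem hK0
  have hbL : b ∈ L := hL.sInf_mem hL0
  set S₁ : Set ℝ := b +ᵥ K with hS₁
  set S₂ : Set ℝ := a +ᵥ L with hS₂
  have hsub : S₁ ∪ S₂ ⊆ K + L := by
    rintro x (hx | hx)
    · obtain ⟨k, hk, rfl⟩ := hx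
      exact ⟨k, hk, b, hbL, (add_comm k b).trans rfl⟩
    · obtain ⟨l, hl, rfl⟩ := hx
      exact ⟨a, haK, l, hl, rfl⟩
  have hinter : S₁ ∩ S₂ ⊆ {a + b} := by
    rintro x ⟨⟨k, hk, rfl⟩, ⟨l, hl, h2⟩⟩
    have h1 : b + k ≤ a + b := by
      have := le_csSup hK.bddAbove hk
      linarith
    have h2' : a + b ≤ b + k := by
      have h2'' : a + l = b + k := h2
      have := csInf_le hL.bddBelow hl
      linarith
    simp [le_antisymm h1 h2']
  have hS₂m : MeasurableSet S₂ := ((hL.vadd a).isClosed).measurableSet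
  calc volume K + volume L = volume S₁ + volume S₂ := by
        rw [hS₁, hS₂, measure_vadd, measure_vadd]
    _ = volume (S₁ ∪ S₂) + volume (S₁ ∩ S₂) := (measure_union_add_inter S₁ hS₂m).symm
    _ ≤ volume (K + L) + volume ({a + b} : Set ℝ) :=
        add_le_add (measure_mono hsub) (measure_mono hinter)
    _ = volume (K + L) := by simp

/-- One-dimensional Brunn–Minkowski for nonempty measurable sets. -/
lemma pk_bm {A B : Set ℝ} (hA : MeasurableSet A) (hB : MeasurableSet B)
    (hA0 : A.Nonempty) (hB0 : B.Nonempty) :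
    volume A + volume B ≤ volume (A + B) := by
  obtain ⟨a₀, ha₀⟩ := hA0
  obtain ⟨b₀, hb₀⟩ := hB0
  rw [hA.measure_eq_iSup_isCompact, hB.measure_eq_iSup_isCompact]
  simp_rw [iSup_and']
  rw [ENNReal.biSup_add' ⟨{a₀}, singleton_subset_iff.mpr ha₀, isCompact_singleton⟩]
  refine iSup₂_le fun K hK => ?_
  obtain ⟨hKA, hKc⟩ := hK
  rw [ENNReal.add_biSup' ⟨{b₀}, singleton_subset_iff.mpr hb₀, isCompact_singleton⟩]
  refine iSup₂_le fun L hL => ?_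
  obtain ⟨hLB, hLc⟩ := hL
  have key : volume (K ∪ {a₀}) + volume (L ∪ {b₀}) ≤ volume ((K ∪ {a₀}) + (L ∪ {b₀})) :=
    pk_bm_compact (hKc.union isCompact_singleton) (hLc.union isCompact_singleton)
      (by simp) (by simp)
  calc volume K + volume L ≤ volume (K ∪ {a₀}) + volume (L ∪ {b₀}) :=
        add_le_add (measure_mono subset_union_left) (measure_mono subset_union_left)
    _ ≤ volume ((K ∪ {a₀}) + (L ∪ {b₀})) := key
    _ ≤ volume (A + B) := by
        refine measure_mono (Set.add_subset_add ?_ ?_)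
        · exact union_subset hKA (singleton_subset_iff.mpr ha₀)
        · exact union_subset hLB (singleton_subset_iff.mpr hb₀)

/-- Integral identity for functions bounded by 1. -/
lemma pk_layer_Ioo {f : ℝ → ℝ≥0∞} (hf : Measurable f) (hf1 : ∀ x, f x ≤ 1) :
    ∫⁻ s in Ioo (0:ℝ) 1, volume {x | ENNReal.ofReal s < f x} = ∫⁻ x, f x := by
  rw [pk_layercake volume hf]
  have hsplit : Ioi (0:ℝ) = Ioo 0 1 ∪ Ici 1 := by
    ext s
    simp only [mem_Ioi, mem_union, mem_Ioo, mem_Ici]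
    constructor
    · intro h; rcases lt_or_ge s 1 with h1 | h1
      · exact Or.inl ⟨h, h1⟩
      · exact Or.inr h1
    · rintro (⟨h, _⟩ | h) <;> linarith
  rw [hsplit, lintegral_union measurableSet_Ici (by
    rw [Set.disjoint_left]; rintro s ⟨_, h1⟩ h2; simp only [mem_Ici] at h2; linarith)]
  have hzero : ∫⁻ s in Ici (1:ℝ), volume {x | ENNReal.ofReal s < f x} = 0 := by
    rw [← lintegral_zero (μ := volume.restrict (Ici (1:ℝ)))]
    refine setLIntegral_congr_fun measurableSet_Ici (fun s hs => ?_)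
    have : {x | ENNReal.ofReal s < f x} = ∅ := by
      ext x
      simp only [mem_setOf_eq, mem_empty_iff_false, iff_false, not_lt]
      exact (hf1 x).trans (by simpa using ENNReal.one_le_ofReal.mpr hs)
    simp [this]
  rw [hzero, add_zero]

/-- Normalized one-dimensional Prékopa–Leindler. -/
lemma pk_one_dim_norm {t : ℝ} (ht0 : 0 < t) (ht1 : t < 1)
    {f g h : ℝ → ℝ≥0∞} (hf : Measurable f) (hg : Measurable g) (hh : Measurable h)
    (hf1 : ∀ x, f x ≤ 1) (hg1 : ∀ y, g y ≤ 1)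
    (hfs : 1 ≤ ⨆ x, f x) (hgs : 1 ≤ ⨆ y, g y)
    (hyp : ∀ x y, f x ^ (1-t) * g y ^ t ≤ h ((1-t)*x + t*y)) :
    ENNReal.ofReal (1-t) * (∫⁻ x, f x) + ENNReal.ofReal t * (∫⁻ y, g y)
      ≤ ∫⁻ z, h z := by
  have h1t : 0 < 1 - t := by linarith
  -- pointwise measure bound on Ioo 0 1
  have key : ∀ s ∈ Ioo (0:ℝ) 1,
      ENNReal.ofReal (1-t) * volume {x | ENNReal.ofReal s < f x}
        + ENNReal.ofReal t * volume {y | ENNReal.ofReal s < g y}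
      ≤ volume {z | ENNReal.ofReal s < h z} := by
    intro s hs
    set c := ENNReal.ofReal s with hc
    have hc0 : c ≠ 0 := (ENNReal.ofReal_pos.mpr hs.1).ne'
    have hctop : c ≠ ⊤ := ENNReal.ofReal_ne_top
    have hc1 : c < 1 := ENNReal.ofReal_lt_one.mpr hs.2
    set A := {x | c < f x} with hA
    set B := {y | c < g y} with hB
    have hAm : MeasurableSet A := measurableSet_lt measurable_const hf
    have hBm : MeasurableSet B := measurableSet_lt measurable_const hg
    have hA0 : A.Nonempty := by
      have : c < ⨆ x, f x := lt_of_lt_of_le hc1 hfs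
      obtain ⟨x, hx⟩ := lt_iSup_iff.mp this
      exact ⟨x, hx⟩
    have hB0 : B.Nonempty := by
      have : c < ⨆ y, g y := lt_of_lt_of_le hc1 hgs
      obtain ⟨y, hy⟩ := lt_iSup_iff.mp this
      exact ⟨y, hy⟩
    have hsub : (1-t) • A + t • B ⊆ {z | c < h z} := by
      rintro z ⟨a', ⟨x, hx, rfl⟩, b', ⟨y, hy, rfl⟩, rfl⟩
      simp only [mem_setOf_eq] at hx hy ⊢
      have hlt : c < f x ^ (1-t) * g y ^ t := by
        have e1 : c = c ^ (1-t) * c ^ t := by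
          rw [← ENNReal.rpow_add _ _ hc0 hctop]; simp
        rw [e1]
        have s1 : c ^ (1-t) < f x ^ (1-t) := ENNReal.rpow_lt_rpow hx h1t
        have s2 : c ^ t ≤ g y ^ t := ENNReal.rpow_le_rpow hy.le ht0.le
        have hct : c ^ t ≠ 0 := by
          simp [ENNReal.rpow_eq_zero_iff, hc0, hctop, ht0, ht0.ne', not_lt.mpr ht0.le]
        have hctt : c ^ t ≠ ⊤ := by
          simp [ENNReal.rpow_eq_top_iff, hc0, hctop, ht0, asymm ht0]
        calc c ^ (1-t) * c ^ t < f x ^ (1-t) * c ^ t :=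
              (ENNReal.mul_lt_mul_iff_left hct hctt).mpr s1
          _ ≤ f x ^ (1-t) * g y ^ t := mul_le_mul_right s2 _
      calc c < f x ^ (1-t) * g y ^ t := hlt
        _ ≤ h ((1-t) * x + t * y) := hyp x y
        _ = h ((1-t) • x + t • y) := by simp [smul_eq_mul]
    have hAm' : MeasurableSet ((1-t) • A) := by
      have : (1-t) • A = (fun z => (1-t)⁻¹ * z) ⁻¹' A := by
        rw [← preimage_smul_inv₀ h1t.ne']
        simp [smul_eq_mul]
      rw [this]
      exact hAm.preimage (measurable_const_mul _)
    have hBm' : MeasurableSet (t • B) := by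
      have : t • B = (fun z => t⁻¹ * z) ⁻¹' B := by
        rw [← preimage_smul_inv₀ ht0.ne']
        simp [smul_eq_mul]
      rw [this]
      exact hBm.preimage (measurable_const_mul _)
    calc ENNReal.ofReal (1-t) * volume A + ENNReal.ofReal t * volume B
        = volume ((1-t) • A) + volume (t • B) := by
          rw [Measure.addHaar_smul, Measure.addHaar_smul]
          simp [abs_of_pos h1t, abs_of_pos ht0]
      _ ≤ volume ((1-t) • A + t • B) :=
          pk_bm hAm' hBm' (hA0.smul_set) (hB0.smul_set)
      _ ≤ volume {z | c < h z} := measure_mono hsub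
  -- assemble
  have hmf : Measurable fun s : ℝ => volume {x | ENNReal.ofReal s < f x} := by
    apply Antitone.measurable
    intro s₁ s₂ hs
    exact measure_mono fun x hx => lt_of_le_of_lt (ENNReal.ofReal_le_ofReal hs) hx
  have hmg : Measurable fun s : ℝ => volume {y | ENNReal.ofReal s < g y} := by
    apply Antitone.measurable
    intro s₁ s₂ hs
    exact measure_mono fun y hy => lt_of_le_of_lt (ENNReal.ofReal_le_ofReal hs) hy
  calc ENNReal.ofReal (1-t) * (∫⁻ x, f x) + ENNReal.ofReal t * (∫⁻ y, g y)
      = ENNReal.ofReal (1-t) * (∫⁻ s in Ioo (0:ℝ) 1, volume {x | ENNReal.ofReal s < f x})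
        + ENNReal.ofReal t * (∫⁻ s in Ioo (0:ℝ) 1, volume {y | ENNReal.ofReal s < g y}) := by
        rw [pk_layer_Ioo hf hf1, pk_layer_Ioo hg hg1]
    _ = ∫⁻ s in Ioo (0:ℝ) 1,
          (ENNReal.ofReal (1-t) * volume {x | ENNReal.ofReal s < f x}
            + ENNReal.ofReal t * volume {y | ENNReal.ofReal s < g y}) := by
        rw [lintegral_add_left (by fun_prop), lintegral_const_mul _ hmf,
          lintegral_const_mul _ hmg]
    _ ≤ ∫⁻ s in Ioo (0:ℝ) 1, volume {z | ENNReal.ofReal s < h z} := by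
        refine lintegral_mono_ae ((ae_restrict_iff' measurableSet_Ioo).mpr
          (ae_of_all _ key))
    _ ≤ ∫⁻ s in Ioi (0:ℝ), volume {z | ENNReal.ofReal s < h z} :=
        lintegral_mono_set fun s hs => hs.1
    _ = ∫⁻ z, h z := (pk_layercake volume hh).symm

lemma pk_iSup_min_nat (a : ℝ≥0∞) : ⨆ n : ℕ, min a (n : ℝ≥0∞) = a := by
  refine le_antisymm (iSup_le fun n => min_le_left _ _) ?_
  rcases eq_or_ne a ⊤ with rfl | ha
  · simp only [min_comm]
    calc (⊤:ℝ≥0∞) = ⨆ n : ℕ, (n : ℝ≥0∞) := (ENNReal.iSup_natCast).symm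
      _ ≤ ⨆ n : ℕ, min (n : ℝ≥0∞) ⊤ := by simp
  · obtain ⟨n, hn⟩ := ENNReal.exists_nat_gt ha
    calc a = min a n := (min_eq_left hn.le).symm
      _ ≤ ⨆ n : ℕ, min a (n : ℝ≥0∞) := le_iSup (fun n : ℕ => min a (n : ℝ≥0∞)) n

lemma pk_rpow_iSup {u : ℕ → ℝ≥0∞} {p : ℝ} (hp : 0 < p) :
    (⨆ n, u n) ^ p = ⨆ n, (u n) ^ p :=
  Monotone.map_iSup_of_continuousAt (ENNReal.continuous_rpow_const.continuousAt)
    (ENNReal.monotone_rpow_of_nonneg hp.le) (by simp [ENNReal.zero_rpow_of_pos hp])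

/-- General one-dimensional Prékopa–Leindler for ENNReal-valued measurable functions. -/
lemma pk_one_dim {t : ℝ} (ht0 : 0 < t) (ht1 : t < 1)
    {f g h : ℝ → ℝ≥0∞} (hf : Measurable f) (hg : Measurable g) (hh : Measurable h)
    (hyp : ∀ x y, f x ^ (1-t) * g y ^ t ≤ h ((1-t)*x + t*y)) :
    (∫⁻ x, f x) ^ (1-t) * (∫⁻ y, g y) ^ t ≤ ∫⁻ z, h z := by
  have h1t : 0 < 1 - t := by linarith
  -- truncated versions
  have main : ∀ N : ℕ,
      (∫⁻ x, min (f x) N) ^ (1-t) * (∫⁻ y, min (g y) N) ^ t ≤ ∫⁻ z, h z := by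
    intro N
    rcases eq_or_ne (∫⁻ x, min (f x) N) 0 with hN0 | hN0
    · rw [hN0, ENNReal.zero_rpow_of_pos h1t, zero_mul]; exact zero_le
    rcases eq_or_ne (∫⁻ y, min (g y) N) 0 with hM0 | hM0
    · rw [hM0, ENNReal.zero_rpow_of_pos ht0, mul_zero]; exact zero_le
    set fN := fun x => min (f x) (N:ℝ≥0∞) with hfN
    set gN := fun y => min (g y) (N:ℝ≥0∞) with hgN
    have hfNm : Measurable fN := hf.min measurable_const
    have hgNm : Measurable gN := hg.min measurable_const
    set Sf := ⨆ x, fN x with hSf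
    set Sg := ⨆ y, gN y with hSg
    have hSf_top : Sf ≠ ⊤ :=
      ne_top_of_le_ne_top (by simp : (N:ℝ≥0∞) ≠ ⊤) (iSup_le fun x => min_le_right _ _)
    have hSg_top : Sg ≠ ⊤ :=
      ne_top_of_le_ne_top (by simp : (N:ℝ≥0∞) ≠ ⊤) (iSup_le fun y => min_le_right _ _)
    have hSf0 : Sf ≠ 0 := by
      intro h0
      apply hN0
      have hz : ∀ x, fN x = 0 := fun x => le_antisymm (h0 ▸ le_iSup fN x) zero_le
      rw [lintegral_congr hz, lintegral_zero]
    have hSg0 : Sg ≠ 0 := by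
      intro h0
      apply hM0
      have hz : ∀ y, gN y = 0 := fun y => le_antisymm (h0 ▸ le_iSup gN y) zero_le
      rw [lintegral_congr hz, lintegral_zero]
    -- normalized functions
    set f' := fun x => Sf⁻¹ * fN x with hf'
    set g' := fun y => Sg⁻¹ * gN y with hg'
    set c := Sf ^ (1-t) * Sg ^ t with hcc
    have hfr0 : Sf ^ (1-t) ≠ 0 := by
      simp [ENNReal.rpow_eq_zero_iff, hSf0, hSf_top, not_lt.mpr h1t.le]
    have hfrt : Sf ^ (1-t) ≠ ⊤ := ENNReal.rpow_ne_top_of_nonneg h1t.le hSf_top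
    have hgr0 : Sg ^ t ≠ 0 := by
      simp [ENNReal.rpow_eq_zero_iff, hSg0, hSg_top, not_lt.mpr ht0.le]
    have hgrt : Sg ^ t ≠ ⊤ := ENNReal.rpow_ne_top_of_nonneg ht0.le hSg_top
    have hc0 : c ≠ 0 := mul_ne_zero hfr0 hgr0
    have hctop : c ≠ ⊤ := ENNReal.mul_ne_top hfrt hgrt
    have hcinv : (Sf⁻¹) ^ (1-t) * (Sg⁻¹) ^ t = c⁻¹ := by
      rw [ENNReal.inv_rpow, ENNReal.inv_rpow, hcc,
        ENNReal.mul_inv (Or.inl hfr0) (Or.inl hfrt)]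
    set h' := fun z => c⁻¹ * h z with hh'
    have key : ENNReal.ofReal (1-t) * (∫⁻ x, f' x) + ENNReal.ofReal t * (∫⁻ y, g' y)
        ≤ ∫⁻ z, h' z := by
      refine pk_one_dim_norm ht0 ht1 (hfNm.const_mul _) (hgNm.const_mul _)
        (hh.const_mul _) ?_ ?_ ?_ ?_ ?_
      · intro x
        calc Sf⁻¹ * fN x ≤ Sf⁻¹ * Sf := mul_le_mul_right (le_iSup fN x) _
          _ = 1 := ENNReal.inv_mul_cancel hSf0 hSf_top
      · intro y
        calc Sg⁻¹ * gN y ≤ Sg⁻¹ * Sg := mul_le_mul_right (le_iSup gN y) _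
          _ = 1 := ENNReal.inv_mul_cancel hSg0 hSg_top
      · refine le_of_eq ?_
        calc (1:ℝ≥0∞) = Sf⁻¹ * Sf := (ENNReal.inv_mul_cancel hSf0 hSf_top).symm
          _ = ⨆ x, Sf⁻¹ * fN x := by rw [hSf, ENNReal.mul_iSup]
      · refine le_of_eq ?_
        calc (1:ℝ≥0∞) = Sg⁻¹ * Sg := (ENNReal.inv_mul_cancel hSg0 hSg_top).symm
          _ = ⨆ y, Sg⁻¹ * gN y := by rw [hSg, ENNReal.mul_iSup]
      · intro x y
        have e1 : f' x ^ (1-t) * g' y ^ t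
            = c⁻¹ * (fN x ^ (1-t) * gN y ^ t) := by
          rw [hf', hg', ENNReal.mul_rpow_of_nonneg _ _ h1t.le,
            ENNReal.mul_rpow_of_nonneg _ _ ht0.le, mul_mul_mul_comm, hcinv]
        rw [e1, hh']
        refine mul_le_mul_right ?_ _
        calc fN x ^ (1-t) * gN y ^ t
            ≤ f x ^ (1-t) * g y ^ t :=
              mul_le_mul' (ENNReal.rpow_le_rpow (min_le_left _ _) h1t.le)
                (ENNReal.rpow_le_rpow (min_le_left _ _) ht0.le)
          _ ≤ h ((1-t)*x + t*y) := hyp x y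
    have hgeom : (∫⁻ x, f' x) ^ (1-t) * (∫⁻ y, g' y) ^ t ≤ ∫⁻ z, h' z :=
      le_trans (pk_geom_mean h1t ht0 (by ring)) key
    have e2 : (∫⁻ x, f' x) = Sf⁻¹ * ∫⁻ x, fN x := lintegral_const_mul _ hfNm
    have e3 : (∫⁻ y, g' y) = Sg⁻¹ * ∫⁻ y, gN y := lintegral_const_mul _ hgNm
    have e4 : (∫⁻ z, h' z) = c⁻¹ * ∫⁻ z, h z := lintegral_const_mul _ hh
    rw [e2, e3, e4, ENNReal.mul_rpow_of_nonneg _ _ h1t.le,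
      ENNReal.mul_rpow_of_nonneg _ _ ht0.le, mul_mul_mul_comm, hcinv] at hgeom
    exact (ENNReal.mul_le_mul_iff_right (ENNReal.inv_ne_zero.mpr hctop)
      (ENNReal.inv_ne_top.mpr hc0)).mp hgeom
  -- pass to the limit
  have hxf : (⨆ N : ℕ, ∫⁻ x, min (f x) (N:ℝ≥0∞)) = ∫⁻ x, f x := by
    rw [← lintegral_iSup (fun N => hf.min measurable_const)
      (fun N M hNM x => min_le_min le_rfl (Nat.cast_le.mpr hNM))]
    exact lintegral_congr fun x => pk_iSup_min_nat (f x)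
  have hyg : (⨆ N : ℕ, ∫⁻ y, min (g y) (N:ℝ≥0∞)) = ∫⁻ y, g y := by
    rw [← lintegral_iSup (fun N => hg.min measurable_const)
      (fun N M hNM y => min_le_min le_rfl (Nat.cast_le.mpr hNM))]
    exact lintegral_congr fun y => pk_iSup_min_nat (g y)
  have step : ∀ N : ℕ, (∫⁻ x, min (f x) (N:ℝ≥0∞)) ^ (1-t) * (∫⁻ y, g y) ^ t
      ≤ ∫⁻ z, h z := by
    intro N
    rw [← hyg, pk_rpow_iSup ht0, ENNReal.mul_iSup]
    refine iSup_le fun M => ?_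
    calc (∫⁻ x, min (f x) (N:ℝ≥0∞)) ^ (1-t) * (∫⁻ y, min (g y) (M:ℝ≥0∞)) ^ t
        ≤ (∫⁻ x, min (f x) ((max N M : ℕ):ℝ≥0∞)) ^ (1-t)
          * (∫⁻ y, min (g y) ((max N M : ℕ):ℝ≥0∞)) ^ t := by
          refine mul_le_mul' (ENNReal.rpow_le_rpow ?_ h1t.le)
            (ENNReal.rpow_le_rpow ?_ ht0.le) <;>
            exact lintegral_mono fun x => min_le_min le_rfl
              (Nat.cast_le.mpr (by simp))
      _ ≤ ∫⁻ z, h z := main _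
  rw [← hxf, pk_rpow_iSup h1t, ENNReal.iSup_mul]
  exact iSup_le step

/-- Prékopa–Leindler on `Fin n → ℝ`. -/
lemma pk_pl_pi : ∀ (n : ℕ) {t : ℝ}, 0 < t → t < 1 →
    ∀ {f g h : (Fin n → ℝ) → ℝ≥0∞}, Measurable f → Measurable g → Measurable h →
    (∀ x y, f x ^ (1-t) * g y ^ t ≤ h ((1-t) • x + t • y)) →
    (∫⁻ x, f x) ^ (1-t) * (∫⁻ y, g y) ^ t ≤ ∫⁻ z, h z := by
  intro n
  induction n with
  | zero =>
    intro t ht0 ht1 f g h hf hg hh hyp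
    have hvol : (volume : Measure (Fin 0 → ℝ)) = Measure.dirac default :=
      Measure.pi_of_empty _ _
    rw [hvol, lintegral_dirac' _ hf, lintegral_dirac' _ hg, lintegral_dirac' _ hh]
    have := hyp default default
    rwa [Subsingleton.elim ((1-t) • (default : Fin 0 → ℝ) + t • default) default] at this
  | succ n IH =>
    intro t ht0 ht1 f g h hf hg hh hyp
    have h1t : 0 < 1 - t := by linarith
    set e := MeasurableEquiv.piFinSuccAbove (fun _ : Fin (n+1) => ℝ) 0 with he
    have mp : MeasurePreserving e volume volume :=
      volume_preserving_piFinSuccAbove (fun _ : Fin (n+1) => ℝ) 0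
    have e_lin : ∀ (c d : ℝ) (x y : Fin (n+1) → ℝ),
        e (c • x + d • y) = c • e x + d • e y := by
      intro c d x y
      refine Prod.ext ?_ (funext fun j => ?_) <;>
        simp [he, MeasurableEquiv.piFinSuccAbove, Fin.insertNthEquiv, smul_eq_mul,
          Fin.tail]
    have esymm_lin : ∀ (c d : ℝ) (p q : ℝ × (Fin n → ℝ)),
        e.symm (c • p + d • q) = c • e.symm p + d • e.symm q := by
      intro c d p q
      apply e.injective
      rw [e_lin, e.apply_symm_apply, e.apply_symm_apply, e.apply_symm_apply]
    -- transferred functions on the product space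
    set f' : ℝ × (Fin n → ℝ) → ℝ≥0∞ := fun p => f (e.symm p) with hf'
    set g' : ℝ × (Fin n → ℝ) → ℝ≥0∞ := fun p => g (e.symm p) with hg'
    set h' : ℝ × (Fin n → ℝ) → ℝ≥0∞ := fun p => h (e.symm p) with hh'
    have hf'm : Measurable f' := hf.comp e.symm.measurable
    have hg'm : Measurable g' := hg.comp e.symm.measurable
    have hh'm : Measurable h' := hh.comp e.symm.measurable
    have int_f : ∫⁻ x, f x = ∫⁻ p, f' p := by
      rw [← mp.lintegral_comp hf'm]
      exact lintegral_congr fun x => (congrArg f (e.symm_apply_apply x)).symm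
    have int_g : ∫⁻ y, g y = ∫⁻ p, g' p := by
      rw [← mp.lintegral_comp hg'm]
      exact lintegral_congr fun y => (congrArg g (e.symm_apply_apply y)).symm
    have int_h : ∫⁻ z, h z = ∫⁻ p, h' p := by
      rw [← mp.lintegral_comp hh'm]
      exact lintegral_congr fun z => (congrArg h (e.symm_apply_apply z)).symm
    -- marginals
    set F : ℝ → ℝ≥0∞ := fun x₁ => ∫⁻ u, f' (x₁, u) with hF
    set G : ℝ → ℝ≥0∞ := fun y₁ => ∫⁻ v, g' (y₁, v) with hG
    set H : ℝ → ℝ≥0∞ := fun z₁ => ∫⁻ w, h' (z₁, w) with hH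
    have hFm : Measurable F := by
      have : Measurable (Function.uncurry fun a b => f' (a, b)) := by
        exact hf'm
      exact this.lintegral_prod_right
    have hGm : Measurable G := by
      have : Measurable (Function.uncurry fun a b => g' (a, b)) := by
        exact hg'm
      exact this.lintegral_prod_right
    have hHm : Measurable H := by
      have : Measurable (Function.uncurry fun a b => h' (a, b)) := by
        exact hh'm
      exact this.lintegral_prod_right
    have hyp1 : ∀ x₁ y₁, F x₁ ^ (1-t) * G y₁ ^ t ≤ H ((1-t)*x₁ + t*y₁) := by
      intro x₁ y₁
      refine IH ht0 ht1 (hf'm.comp measurable_prodMk_left)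
        (hg'm.comp measurable_prodMk_left) (hh'm.comp measurable_prodMk_left) ?_
      intro u v
      have hpair : ((1-t) • ((x₁, u) : ℝ × (Fin n → ℝ)) + t • (y₁, v))
          = (((1-t)*x₁ + t*y₁, (1-t) • u + t • v) : ℝ × (Fin n → ℝ)) := rfl
      have hmix : (1-t) • e.symm (x₁, u) + t • e.symm (y₁, v)
          = e.symm (((1-t)*x₁ + t*y₁, (1-t) • u + t • v)) := by
        rw [← esymm_lin, hpair]
      have := hyp (e.symm (x₁, u)) (e.symm (y₁, v))
      rw [hmix] at this
      exact this
    -- apply 1-d and Fubini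
    have final := pk_one_dim ht0 ht1 hFm hGm hHm hyp1
    have ff : ∫⁻ p, f' p = ∫⁻ x₁, F x₁ := by
      rw [hF]; rw [← lintegral_prod _ hf'm.aemeasurable]; rfl
    have gg : ∫⁻ p, g' p = ∫⁻ y₁, G y₁ := by
      rw [hG]; rw [← lintegral_prod _ hg'm.aemeasurable]; rfl
    have hhh : ∫⁻ p, h' p = ∫⁻ z₁, H z₁ := by
      rw [hH]; rw [← lintegral_prod _ hh'm.aemeasurable]; rfl
    rw [int_f, int_g, int_h, ff, gg, hhh]
    exact final

/-- Prékopa–Leindler on Euclidean space. -/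
lemma pk_pl_euclidean (n : ℕ) {t : ℝ} (ht0 : 0 < t) (ht1 : t < 1)
    {f g h : EuclideanSpace ℝ (Fin n) → ℝ≥0∞}
    (hf : Measurable f) (hg : Measurable g) (hh : Measurable h)
    (hyp : ∀ x y, f x ^ (1-t) * g y ^ t ≤ h ((1-t) • x + t • y)) :
    (∫⁻ x, f x) ^ (1-t) * (∫⁻ y, g y) ^ t ≤ ∫⁻ z, h z := by
  set e := (MeasurableEquiv.toLp 2 (Fin n → ℝ)).symm with he
  have mp : MeasurePreserving e volume volume :=
    EuclideanSpace.volume_preserving_symm_measurableEquiv_toLp (Fin n)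
  have esymm_lin : ∀ (c d : ℝ) (p q : Fin n → ℝ),
      e.symm (c • p + d • q) = c • e.symm p + d • e.symm q := by
    intro c d p q; rfl
  set f' : (Fin n → ℝ) → ℝ≥0∞ := fun p => f (e.symm p) with hf'
  set g' : (Fin n → ℝ) → ℝ≥0∞ := fun p => g (e.symm p) with hg'
  set h' : (Fin n → ℝ) → ℝ≥0∞ := fun p => h (e.symm p) with hh'
  have hf'm : Measurable f' := hf.comp e.symm.measurable
  have hg'm : Measurable g' := hg.comp e.symm.measurable
  have hh'm : Measurable h' := hh.comp e.symm.measurable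
  have int_f : ∫⁻ x, f x = ∫⁻ p, f' p := by
    rw [← mp.lintegral_comp hf'm]
    exact lintegral_congr fun x => (congrArg f (e.symm_apply_apply x)).symm
  have int_g : ∫⁻ y, g y = ∫⁻ p, g' p := by
    rw [← mp.lintegral_comp hg'm]
    exact lintegral_congr fun y => (congrArg g (e.symm_apply_apply y)).symm
  have int_h : ∫⁻ z, h z = ∫⁻ p, h' p := by
    rw [← mp.lintegral_comp hh'm]
    exact lintegral_congr fun z => (congrArg h (e.symm_apply_apply z)).symm
  rw [int_f, int_g, int_h]
  refine pk_pl_pi n ht0 ht1 hf'm hg'm hh'm ?_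
  intro x y
  show f (e.symm x) ^ (1-t) * g (e.symm y) ^ t ≤ h (e.symm ((1-t) • x + t • y))
  rw [esymm_lin]
  exact hyp _ _

lemma pk_meas_indicator {E : Type*} [MeasurableSpace E] [TopologicalSpace E]
    [OpensMeasurableSpace E] {V : Set E} (hV : IsOpen V) {ψ : E → ℝ≥0∞}
    (hψ : ContinuousOn ψ V) : Measurable (V.indicator ψ) := by
  apply measurable_of_isOpen
  intro O hO
  rw [Set.indicator_preimage]
  refine MeasurableSet.union ?_ ?_
  · rw [inter_comm]
    exact (hψ.isOpen_inter_preimage hV hO).measurableSet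
  · exact MeasurableSet.diff (measurable_const hO.measurableSet) hV.measurableSet


/-- Prékopa's theorem on a bounded convex domain: if `V ⊆ ℝⁿ` is a bounded open convex
domain, `φ` is convex on `ℝ × V`, and `∫_V e^{-φ(t,x)} dλ(x) < ∞` for each `t`, then
`Φ(t) := -log ∫_V e^{-φ(t,x)} dλ(x)` is convex on `ℝ`. -/
theorem prekopa_bounded (n : ℕ) (V : Set (EuclideanSpace ℝ (Fin n)))
    (hVopen : IsOpen V) (hVconv : Convex ℝ V) (hVbdd : Bornology.IsBounded V)
    (φ : ℝ × EuclideanSpace ℝ (Fin n) → ℝ)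
    (hφ : ConvexOn ℝ ((Set.univ : Set ℝ) ×ˢ V) φ)
    (hint : ∀ t : ℝ, IntegrableOn (fun x : EuclideanSpace ℝ (Fin n) => Real.exp (-φ (t, x))) V) :
    ConvexOn ℝ Set.univ
      (fun t : ℝ => -Real.log (∫ x in V, Real.exp (-φ (t, x)))) := by
  have hVm : MeasurableSet V := hVopen.measurableSet
  set I : ℝ → ℝ := fun t => ∫ x in V, Real.exp (-φ (t, x)) with hI
  rcases eq_or_ne (volume V) 0 with hV0 | hV0
  · have hz : ∀ t, I t = 0 := by
      intro t
      rw [hI]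
      simp only
      rw [Measure.restrict_eq_zero.mpr hV0, integral_zero_measure]
    have : (fun t : ℝ => -Real.log (∫ x in V, Real.exp (-φ (t, x)))) = fun _ => 0 := by
      funext t
      rw [show (∫ x in V, Real.exp (-φ (t, x))) = I t from rfl, hz, Real.log_zero, neg_zero]
    rw [this]
    exact convexOn_const 0 convex_univ
  -- slice continuity
  have slice_cont : ∀ t : ℝ, ContinuousOn (fun x => φ (t, x)) V := by
    intro t
    have aff : ConvexOn ℝ V (fun x => φ (t, x)) := by
      refine ⟨hVconv, fun x hx y hy a b ha hb hab => ?_⟩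
      have key := hφ.2 (show ((t,x) : ℝ × _) ∈ _ from ⟨trivial, hx⟩)
        (show ((t,y) : ℝ × _) ∈ _ from ⟨trivial, hy⟩) ha hb hab
      have e1 : a • ((t,x) : ℝ × EuclideanSpace ℝ (Fin n)) + b • (t,y)
          = (t, a • x + b • y) := by
        refine Prod.ext ?_ rfl
        show a * t + b * t = t
        rw [← add_mul, hab, one_mul]
      rwa [e1] at key
    exact aff.continuousOn hVopen
  -- ENNReal versions
  set fE : ℝ → EuclideanSpace ℝ (Fin n) → ℝ≥0∞ :=
    fun t => V.indicator (fun x => ENNReal.ofReal (Real.exp (-φ (t, x)))) with hfE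
  have hfEm : ∀ t, Measurable (fE t) := by
    intro t
    refine pk_meas_indicator hVopen ?_
    exact (ENNReal.continuous_ofReal.comp
      (Real.continuous_exp.comp continuous_neg)).comp_continuousOn (slice_cont t)
  have hJ : ∀ t, ∫⁻ x, fE t x = ENNReal.ofReal (I t) := by
    intro t
    rw [hfE]
    simp only
    rw [lintegral_indicator hVm,
      ← ofReal_integral_eq_lintegral_ofReal (hint t)
        (ae_of_all _ fun x => (Real.exp_pos _).le)]
  have hIpos : ∀ t, 0 < I t := by
    intro t
    rw [hI]
    simp only
    rw [setIntegral_pos_iff_support_of_nonneg_ae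
      (ae_of_all _ fun x => (Real.exp_pos _).le) (hint t)]
    have : Function.support (fun x : EuclideanSpace ℝ (Fin n) => Real.exp (-φ (t, x)))
        = univ := by
      ext x; simp [Function.support, (Real.exp_pos _).ne']
    rw [this, univ_inter]
    exact pos_iff_ne_zero.mpr hV0
  -- convexity
  refine ⟨convex_univ, fun t₀ _ t₁ _ a b ha hb hab => ?_⟩
  rcases eq_or_lt_of_le ha with rfl | ha'
  · have hb1 : b = 1 := by linarith
    subst hb1; simp
  rcases eq_or_lt_of_le hb with rfl | hb'
  · have ha1 : a = 1 := by linarith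
    subst ha1; simp
  have hba : 1 - b = a := by linarith
  set tm := a • t₀ + b • t₁ with htm
  -- PL hypothesis
  have hyp : ∀ x y, fE t₀ x ^ (1-b) * fE t₁ y ^ b ≤ fE tm ((1-b) • x + b • y) := by
    intro x y
    by_cases hx : x ∈ V
    · by_cases hy : y ∈ V
      · have hmix : (1-b) • x + b • y ∈ V := by
          rw [hba]
          exact hVconv hx hy ha'.le hb'.le hab
        rw [hfE]
        simp only [Set.indicator_of_mem hx, Set.indicator_of_mem hy,
          Set.indicator_of_mem hmix]
        rw [ENNReal.ofReal_rpow_of_pos (Real.exp_pos _),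
          ENNReal.ofReal_rpow_of_pos (Real.exp_pos _),
          ← ENNReal.ofReal_mul (Real.rpow_nonneg (Real.exp_pos _).le _)]
        refine ENNReal.ofReal_le_ofReal ?_
        rw [← Real.exp_mul, ← Real.exp_mul, ← Real.exp_add]
        refine Real.exp_le_exp.mpr ?_
        have key := hφ.2 (show ((t₀,x) : ℝ × _) ∈ _ from ⟨trivial, hx⟩)
          (show ((t₁,y) : ℝ × _) ∈ _ from ⟨trivial, hy⟩) ha'.le hb'.le hab
        have e1 : a • ((t₀,x) : ℝ × EuclideanSpace ℝ (Fin n)) + b • (t₁,y)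
            = (tm, a • x + b • y) := rfl
        rw [e1] at key
        rw [hba]
        calc -φ (t₀, x) * a + -φ (t₁, y) * b
            = -(a * φ (t₀, x) + b * φ (t₁, y)) := by ring
          _ ≤ -φ (tm, a • x + b • y) := neg_le_neg key
      · rw [hfE]
        simp only [Set.indicator_of_notMem hy]
        rw [ENNReal.zero_rpow_of_pos hb', mul_zero]
        exact zero_le
    · rw [hfE]
      simp only [Set.indicator_of_notMem hx]
      rw [ENNReal.zero_rpow_of_pos (by linarith : (0:ℝ) < 1 - b), zero_mul]
      exact zero_le
  have hPL := pk_pl_euclidean n hb' (by linarith : b < 1)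
    (hfEm t₀) (hfEm t₁) (hfEm tm) hyp
  rw [hJ, hJ, hJ] at hPL
  rw [ENNReal.ofReal_rpow_of_pos (hIpos t₀), ENNReal.ofReal_rpow_of_pos (hIpos t₁),
    ← ENNReal.ofReal_mul (Real.rpow_nonneg (hIpos t₀).le _)] at hPL
  have key : I t₀ ^ (1-b) * I t₁ ^ b ≤ I tm :=
    (ENNReal.ofReal_le_ofReal_iff (hIpos tm).le).mp hPL
  have hprodpos : 0 < I t₀ ^ (1-b) * I t₁ ^ b :=
    mul_pos (Real.rpow_pos_of_pos (hIpos t₀) _) (Real.rpow_pos_of_pos (hIpos t₁) _)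
  calc -Real.log (I (a • t₀ + b • t₁)) ≤ -Real.log (I t₀ ^ (1-b) * I t₁ ^ b) :=
        neg_le_neg (Real.log_le_log hprodpos key)
    _ = a • -Real.log (I t₀) + b • -Real.log (I t₁) := by
        rw [Real.log_mul (Real.rpow_pos_of_pos (hIpos t₀) _).ne'
          (Real.rpow_pos_of_pos (hIpos t₁) _).ne',
          Real.log_rpow (hIpos t₀), Real.log_rpow (hIpos t₁), hba]
        simp only [smul_eq_mul]
        ring
end
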